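/- Let G and H be graphs such that G does not contain H as an immersion. Suppose u, v ∈ V(G) are joined by at least |E(H)| parallel edges. Let G' be obtained from G by deleting all edges between u and v and identifying u and v into a single vertex. Then G' does not contain H as an immersion. -/

import Mathlib

/-- A finite multigraph without loops: a vertex type, an edge type, and an
endpoint map assigning to each edge an unordered pair of distinct vertices. -/
structure Multigraph where
  V : Type
  E : Type
  [finV : Finite V]
  [finE : Finite E]
  ends : E → Sym2 V
  no_loops : ∀ e, ¬ (ends e).IsDiag

attribute [instance] Multigraph.finV Multigraph.finE

namespace Multigraph

variable (G : Multigraph)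

/-- The set of edges with exactly one endpoint in `X`. -/
def edgeBoundary (X : Set G.V) : Set G.E :=
  {e | ∃ u v, G.ends e = s(u, v) ∧ u ∈ X ∧ v ∉ X}

/-- The degree of a vertex: the number of edges incident with it. -/
noncomputable def degree (v : G.V) : ℕ := {e | v ∈ G.ends e}.ncard

/-- Two vertices are adjacent if some edge joins them. -/
def Adj (u v : G.V) : Prop := ∃ e, G.ends e = s(u, v)

/-- Walks in a multigraph. -/
inductive Walk : G.V → G.V → Type
  | nil (v : G.V) : Walk v v
  | cons {u v w : G.V} (e : G.E) (h : G.ends e = s(u, v)) (p : Walk v w) : Walk u w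

variable {G}

/-- The list of edges of a walk. -/
def Walk.edges : ∀ {u v : G.V}, G.Walk u v → List G.E
  | _, _, .nil _ => []
  | _, _, .cons e _ p => e :: p.edges

/-- The list of vertices of a walk, from the first to the last. -/
def Walk.support : ∀ {u v : G.V}, G.Walk u v → List G.V
  | _, v, .nil _ => [v]
  | u, _, .cons _ _ p => u :: p.support

/-- A walk is a path if it repeats no vertex. -/
def Walk.IsPath {u v : G.V} (p : G.Walk u v) : Prop := p.support.Nodup

/-- The internal vertices of a walk (all vertices except the two endpoints). -/
def Walk.internals {u v : G.V} (p : G.Walk u v) : List G.V := p.support.tail.dropLast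

/-- The walk avoids the edge set `F`. -/
def Walk.avoids {u v : G.V} (p : G.Walk u v) (F : Set G.E) : Prop := ∀ e ∈ p.edges, e ∉ F

variable (G)

/-- Any two vertices can be joined by a walk avoiding the edge set `F`. -/
def ConnectedAvoiding (F : Set G.E) : Prop :=
  ∀ u v : G.V, ∃ p : G.Walk u v, p.avoids F

/-- A multigraph is connected if any two vertices are joined by a walk. -/
def Connected : Prop := G.ConnectedAvoiding ∅

/-- A multigraph is `k`-edge-connected if it has at least two vertices and
deleting any fewer than `k` edges leaves it connected. -/
def EdgeConnected (k : ℕ) : Prop :=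
  Nontrivial G.V ∧ ∀ F : Set G.E, F.ncard < k → G.ConnectedAvoiding F

end Multigraph

open Multigraph

/-- The data of a (weak) immersion of `H` in `G`: an injection of the vertices and
pairwise edge-disjoint composite paths, one for each edge of `H`. -/
structure ImmersionData (H G : Multigraph) where
  π : H.V → G.V
  inj : Function.Injective π
  pathEnds : H.E → G.V × G.V
  path : ∀ f : H.E, G.Walk (pathEnds f).1 (pathEnds f).2
  ends_eq : ∀ f : H.E, Sym2.map π (H.ends f) = s((pathEnds f).1, (pathEnds f).2)
  isPath : ∀ f, (path f).IsPath
  edge_disj : ∀ f f', f ≠ f' → ∀ e, e ∈ (path f).edges → e ∉ (path f').edges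

/-- `G` contains `H` as a (weak) immersion. -/
def Immersion (H G : Multigraph) : Prop := Nonempty (ImmersionData H G)

/-- An immersion is strong if no branch vertex is an internal vertex of a composite path. -/
def ImmersionData.Strong {H G : Multigraph} (I : ImmersionData H G) : Prop :=
  ∀ f : H.E, ∀ v : H.V, I.π v ∉ (I.path f).internals

/-- `G` contains `H` as a strong immersion. -/
def StrongImmersion (H G : Multigraph) : Prop := ∃ I : ImmersionData H G, I.Strong

/-- `G` contains `H` as a topological minor: an immersion whose composite paths are
internally vertex-disjoint and avoid the branch vertices internally. -/
def TopologicalMinor (H G : Multigraph) : Prop :=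
  ∃ I : ImmersionData H G,
    (∀ f v, I.π v ∉ (I.path f).internals) ∧
    (∀ f f', f ≠ f' → ∀ w, w ∈ (I.path f).internals → w ∉ (I.path f').internals)

/-- The complete multigraph `K t`: one edge for every unordered pair of distinct vertices. -/
def cliqueGraph (t : ℕ) : Multigraph where
  V := Fin t
  E := {p : Sym2 (Fin t) // ¬ p.IsDiag}
  ends := Subtype.val
  no_loops := fun e => e.2

/-- The multigraph `S_{k,n}`: vertices `x_1, …, x_n` (`some i`) and `y` (`none`), with
exactly `k` parallel edges between each `x_i` and `y`. -/
def starMulti (k n : ℕ) : Multigraph where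
  V := Option (Fin n)
  E := Fin n × Fin k
  ends := fun p => s(some p.1, none)
  no_loops := fun e h => by simp [Sym2.mk_isDiag_iff] at h

/-- The multigraph `P_{k,n}`: a path on `n` vertices with each edge replaced by `k`
parallel edges. -/
def pathMulti (k n : ℕ) : Multigraph where
  V := Fin n
  E := Fin (n - 1) × Fin k
  ends := fun p => s(⟨p.1.1, by have := p.1.2; omega⟩, ⟨p.1.1 + 1, by have := p.1.2; omega⟩)
  no_loops := fun e h => by simp [Sym2.mk_isDiag_iff, Fin.ext_iff] at h

namespace Multigraph

/-- A subgraph of a multigraph, given by a set of vertices and a set of edges with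
both endpoints among those vertices. -/
structure Sub (G : Multigraph) where
  verts : Set G.V
  edgeSet : Set G.E
  closed : ∀ e ∈ edgeSet, ∀ v ∈ G.ends e, v ∈ verts

/-- `(A, B)` is a separation: `A` and `B` are edge-disjoint subgraphs whose union is `G`. -/
def IsSeparation {G : Multigraph} (A B : G.Sub) : Prop :=
  A.verts ∪ B.verts = Set.univ ∧ A.edgeSet ∪ B.edgeSet = Set.univ ∧ A.edgeSet ∩ B.edgeSet = ∅

/-- The order of a separation `(A, B)`. -/
noncomputable def sepOrder {G : Multigraph} (A B : G.Sub) : ℕ := (A.verts ∩ B.verts).ncard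

/-- `𝒯` is a tangle of order `Θ` in `G`. -/
def IsTangle (G : Multigraph) (𝒯 : Set (G.Sub × G.Sub)) (Θ : ℕ) : Prop :=
  (∀ p ∈ 𝒯, IsSeparation p.1 p.2 ∧ sepOrder p.1 p.2 < Θ) ∧
  (∀ A B : G.Sub, IsSeparation A B → sepOrder A B < Θ → (A, B) ∈ 𝒯 ∨ (B, A) ∈ 𝒯) ∧
  (∀ p₁ ∈ 𝒯, ∀ p₂ ∈ 𝒯, ∀ p₃ ∈ 𝒯,
    ¬ (p₁.1.verts ∪ p₂.1.verts ∪ p₃.1.verts = Set.univ ∧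
       p₁.1.edgeSet ∪ p₂.1.edgeSet ∪ p₃.1.edgeSet = Set.univ)) ∧
  (∀ p ∈ 𝒯, p.1.verts ≠ Set.univ)

/-- The line graph of a multigraph: vertices are the edges of `G`, with an edge of the
line graph for each unordered pair of distinct edges of `G` sharing an endpoint. -/
def lineGraph (G : Multigraph) : Multigraph where
  V := G.E
  E := {p : Sym2 G.E // ¬ p.IsDiag ∧ ∃ e f, p = s(e, f) ∧ ∃ v, v ∈ G.ends e ∧ v ∈ G.ends f}
  ends := Subtype.val
  no_loops := fun e => e.2.1

/-- `G'` (with projection `q` and new vertex `x`) is obtained from `G` by consolidating the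
vertex set `X`: delete all edges with both ends in `X` and identify `X` to the vertex `x`. -/
def IsConsolidation (G : Multigraph) (X : Set G.V) (G' : Multigraph)
    (q : G.V → G'.V) (x : G'.V) : Prop :=
  Function.Surjective q ∧ (∀ a ∈ X, q a = x) ∧ (∀ a ∉ X, q a ≠ x) ∧
  (∀ a b, a ∉ X → b ∉ X → q a = q b → a = b) ∧
  ∃ φ : {e : G.E // ∃ w ∈ G.ends e, w ∉ X} ≃ G'.E,
    ∀ e, G'.ends (φ e) = Sym2.map q (G.ends e.1)

/-- An `X`-spider of order `k` with body `v`: `k` pairwise edge-disjoint paths from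
`v ∉ X` to `X`, none of them having an internal vertex in `X`. -/
def HasSpiderWithBody (G : Multigraph) (X : Set G.V) (k : ℕ) (v : G.V) : Prop :=
  v ∉ X ∧ ∃ (tgt : Fin k → G.V) (P : ∀ i, G.Walk v (tgt i)),
    (∀ i, tgt i ∈ X) ∧ (∀ i, (P i).IsPath) ∧
    (∀ i, ∀ w ∈ (P i).internals, w ∉ X) ∧
    (∀ i j, i ≠ j → ∀ e ∈ (P i).edges, e ∉ (P j).edges)

/-- `G` contains an `X`-spider of order `k`. -/
def HasXSpider (G : Multigraph) (X : Set G.V) (k : ℕ) : Prop :=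
  ∃ v, HasSpiderWithBody G X k v

/-- A model of the complete graph `K t` in `G`: `t` pairwise disjoint nonempty connected
branch sets with an edge of `G` between any two of them. -/
def IsCliqueModel (G : Multigraph) (t : ℕ) (X : Fin t → Set G.V) : Prop :=
  (∀ i, (X i).Nonempty) ∧
  (∀ i j, i ≠ j → Disjoint (X i) (X j)) ∧
  (∀ i, ∀ u ∈ X i, ∀ v ∈ X i, ∃ p : G.Walk u v, ∀ w ∈ p.support, w ∈ X i) ∧
  (∀ i j, i ≠ j → ∃ e, ∃ a ∈ X i, ∃ b ∈ X j, G.ends e = s(a, b))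

/-- The canonical separation `(A, B)` of the line graph of `G` associated to a vertex
set `U ⊆ V(G)`. -/
def IsCanonicalSeparation (G : Multigraph) (U : Set G.V) (A B : G.lineGraph.Sub) : Prop :=
  A.verts = {e : G.E | ∃ w ∈ G.ends e, w ∈ U} ∧
  A.edgeSet = {p : G.lineGraph.E | ∀ q ∈ G.lineGraph.ends p, ∃ w ∈ G.ends q, w ∈ U} ∧
  B.verts = {e : G.E | ∃ w ∈ G.ends e, w ∉ U} ∧
  B.edgeSet = {p : G.lineGraph.E | (∀ q ∈ G.lineGraph.ends p, ∃ w ∈ G.ends q, w ∉ U) ∧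
    ¬ (∀ q ∈ G.lineGraph.ends p, q ∈ G.edgeBoundary U)}

/-- A `k`-star with center `u`: a set of `k` edges all incident with `u`. -/
def IsKStarWithCenter (G : Multigraph) (F : Set G.E) (k : ℕ) (u : G.V) : Prop :=
  F.ncard = k ∧ ∀ e ∈ F, u ∈ G.ends e

/-- A set `F` of vertices of the line graph of `G` is free with respect to a tangle `𝒯`
in the line graph if no separation in `𝒯` of order less than `|F|` has `F` on its small side. -/
def FreeInTangle (G : Multigraph) (𝒯 : Set (G.lineGraph.Sub × G.lineGraph.Sub))
    (F : Set G.E) : Prop :=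
  ¬ ∃ p ∈ 𝒯, sepOrder p.1 p.2 < F.ncard ∧ F ⊆ p.1.verts

end Multigraph


namespace ConsProofAux
open Multigraph

variable {G G' : Multigraph} {q : G.V → G'.V} {u v : G.V}

lemma support_head {a b : G.V} (W : G.Walk a b) : W.support = a :: W.support.tail := by
  cases W <;> rfl

lemma exists_lift_ends {e0 : G.E} {a c : G'.V}
    (h : Sym2.map q (G.ends e0) = s(a, c)) :
    ∃ pr : G.V × G.V, G.ends e0 = s(pr.1, pr.2) ∧ q pr.1 = a ∧ q pr.2 = c := by
  obtain ⟨p₁, p₂, hz⟩ : ∃ x y, G.ends e0 = s(x, y) := by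
    induction G.ends e0 using Sym2.ind with
    | _ x y => exact ⟨x, y, rfl⟩
  rw [hz, Sym2.map_pair_eq, Sym2.eq_iff] at h
  rcases h with ⟨h1, h2⟩ | ⟨h1, h2⟩
  · exact ⟨(p₁, p₂), hz, h1, h2⟩
  · exact ⟨(p₂, p₁), hz.trans Sym2.eq_swap, h2, h1⟩

/-- Result of lifting a walk of `G'` back to `G`. -/
structure LiftRes (q : G.V → G'.V) (s : G.E) (lift : G'.E → G.E)
    {a b : G'.V} (p : G'.Walk a b) (b0 : G.V) where
  start : G.V
  walk : G.Walk start b0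
  qstart : q start = a
  tail_mem : ∀ z ∈ walk.support.tail, q z ∈ p.support.tail
  nodup : p.support.Nodup → walk.support.Nodup
  edges_sub : ∀ t ∈ walk.edges, t = s ∨ ∃ e' ∈ p.edges, t = lift e'

noncomputable def liftWalk
    (hq : ∀ a b : G.V, q a = q b → a ≠ b → s(a, b) = s(u, v))
    (s : G.E) (hs : G.ends s = s(u, v))
    (lift : G'.E → G.E)
    (hlift : ∀ e', Sym2.map q (G.ends (lift e')) = G'.ends e') :
    ∀ {a b : G'.V} (p : G'.Walk a b) (b0 : G.V), q b0 = b → LiftRes q s lift p b0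
  | _, _, .nil _, b0, hb =>
      ⟨b0, .nil b0, hb, by simp [Walk.support], fun _ => by simp [Walk.support, Walk.IsPath],
        by simp [Walk.edges]⟩
  | a, b, .cons (v := c) e' h p, b0, hb => by
    have R := liftWalk hq s hs lift hlift p b0 hb
    have hex := exists_lift_ends (q := q) (e0 := lift e') ((hlift e').trans h)
    let pr := Classical.choose hex
    have hpr : G.ends (lift e') = s(pr.1, pr.2) ∧ q pr.1 = a ∧ q pr.2 = c :=
      Classical.choose_spec hex
    -- facts common to both cases
    have hmemR : ∀ z ∈ R.walk.support, q z ∈ p.support := by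
      intro z hz
      rw [support_head R.walk] at hz
      rcases List.mem_cons.mp hz with hz | hz
      · rw [hz, R.qstart, support_head p]; exact List.mem_cons_self
      · rw [support_head p]; exact List.mem_cons_of_mem _ (R.tail_mem z hz)
    by_cases hcc : pr.2 = R.start
    · have h1 : G.ends (lift e') = s(pr.1, R.start) := by rw [hpr.1, hcc]
      refine ⟨pr.1, .cons (lift e') h1 R.walk, hpr.2.1, ?_, ?_, ?_⟩
      · intro z hz
        show q z ∈ p.support
        exact hmemR z hz
      · intro hnd
        have hnd' : a ∉ p.support ∧ p.support.Nodup := by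
          simpa [Walk.support, List.nodup_cons] using hnd
        have : (pr.1 :: R.walk.support).Nodup := by
          rw [List.nodup_cons]
          refine ⟨fun hmem => ?_, R.nodup hnd'.2⟩
          have := hmemR _ hmem
          rw [hpr.2.1] at this
          exact hnd'.1 this
        simpa [Walk.support] using this
      · intro t ht
        rcases (by simpa [Walk.edges] using ht : t = lift e' ∨ t ∈ R.walk.edges) with ht | ht
        · exact Or.inr ⟨e', by simp [Walk.edges], ht⟩
        · rcases R.edges_sub t ht with h' | ⟨e'', he'', rfl⟩
          · exact Or.inl h'
          · exact Or.inr ⟨e'', by simp [Walk.edges, he''], rfl⟩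
    · have hqq : q pr.2 = q R.start := by rw [hpr.2.2, R.qstart]
      have h2 : G.ends s = s(pr.2, R.start) := by rw [hs, ← hq pr.2 R.start hqq hcc]
      refine ⟨pr.1, .cons (lift e') hpr.1 (.cons s h2 R.walk), hpr.2.1, ?_, ?_, ?_⟩
      · intro z hz
        show q z ∈ p.support
        rcases (by simpa [Walk.support] using hz : z = pr.2 ∨ z ∈ R.walk.support) with hz | hz
        · rw [hz, hpr.2.2, support_head p]; exact List.mem_cons_self
        · exact hmemR z hz
      · intro hnd
        have hnd' : a ∉ p.support ∧ p.support.Nodup := by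
          simpa [Walk.support, List.nodup_cons] using hnd
        have hc_tail : c ∉ p.support.tail := by
          have := hnd'.2
          rw [support_head p, List.nodup_cons] at this
          exact this.1
        have h2nd : pr.2 ∉ R.walk.support := by
          intro hmem
          rw [support_head R.walk] at hmem
          rcases List.mem_cons.mp hmem with hmem | hmem
          · exact hcc hmem
          · have := R.tail_mem _ hmem
            rw [hpr.2.2] at this
            exact hc_tail this
        have h1nd : pr.1 ∉ pr.2 :: R.walk.support := by
          intro hmem
          rcases List.mem_cons.mp hmem with hmem | hmem
          · exact hnd'.1 (by rw [← hpr.2.1, hmem, hpr.2.2, support_head p]; exact List.mem_cons_self)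
          · exact hnd'.1 (by rw [← hpr.2.1]; exact hmemR _ hmem)
        have : (pr.1 :: pr.2 :: R.walk.support).Nodup := by
          rw [List.nodup_cons, List.nodup_cons]
          exact ⟨h1nd, h2nd, R.nodup hnd'.2⟩
        simpa [Walk.support] using this
      · intro t ht
        rcases (by simpa [Walk.edges] using ht :
            t = lift e' ∨ t = s ∨ t ∈ R.walk.edges) with ht | ht | ht
        · exact Or.inr ⟨e', by simp [Walk.edges], ht⟩
        · exact Or.inl ht
        · rcases R.edges_sub t ht with h' | ⟨e'', he'', rfl⟩
          · exact Or.inl h'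
          · exact Or.inr ⟨e'', by simp [Walk.edges, he''], rfl⟩

/-- Final lifted walk with prescribed endpoints. -/
structure FinalRes (q : G.V → G'.V) (s : G.E) (lift : G'.E → G.E)
    {a b : G'.V} (p : G'.Walk a b) (a0 b0 : G.V) where
  walk : G.Walk a0 b0
  nodup : p.support.Nodup → walk.support.Nodup
  edges_sub : ∀ t ∈ walk.edges, t = s ∨ ∃ e' ∈ p.edges, t = lift e'

noncomputable def finalLift
    (hq : ∀ a b : G.V, q a = q b → a ≠ b → s(a, b) = s(u, v))
    (s : G.E) (hs : G.ends s = s(u, v))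
    (lift : G'.E → G.E)
    (hlift : ∀ e', Sym2.map q (G.ends (lift e')) = G'.ends e')
    {a b : G'.V} (p : G'.Walk a b) (a0 b0 : G.V) (ha : q a0 = a) (hb : q b0 = b) :
    FinalRes q s lift p a0 b0 := by
  have R := liftWalk hq s hs lift hlift p b0 hb
  by_cases hst : R.start = a0
  · subst hst
    exact ⟨R.walk, R.nodup, R.edges_sub⟩
  · have hqq : q a0 = q R.start := by rw [ha, R.qstart]
    have h2 : G.ends s = s(a0, R.start) := by
      rw [hs, ← hq a0 R.start hqq (fun h' => hst h'.symm)]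
    refine ⟨.cons s h2 R.walk, ?_, ?_⟩
    · intro hnd
      have hmemR : ∀ z ∈ R.walk.support, q z ∈ p.support := by
        intro z hz
        rw [support_head R.walk] at hz
        rcases List.mem_cons.mp hz with hz | hz
        · rw [hz, R.qstart, support_head p]; exact List.mem_cons_self
        · rw [support_head p]; exact List.mem_cons_of_mem _ (R.tail_mem z hz)
      have ha_tail : a ∉ p.support.tail := by
        have := hnd
        rw [support_head p, List.nodup_cons] at this
        exact this.1
      have ha0 : a0 ∉ R.walk.support := by
        intro hmem
        rw [support_head R.walk] at hmem
        rcases List.mem_cons.mp hmem with hmem | hmem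
        · exact hst hmem.symm
        · have := R.tail_mem _ hmem
          rw [ha] at this
          exact ha_tail this
      have : (a0 :: R.walk.support).Nodup := List.nodup_cons.mpr ⟨ha0, R.nodup hnd⟩
      simpa [Walk.support] using this
    · intro t ht
      rcases (by simpa [Walk.edges] using ht : t = s ∨ t ∈ R.walk.edges) with ht | ht
      · exact Or.inl ht
      · exact R.edges_sub t ht

end ConsProofAux

open Multigraph in
/-- consolidating two vertices joined by at least `|E(H)|` parallel edges
preserves not containing `H` as an immersion. -/
theorem consolidation_no_immersion (G H : Multigraph) (u v : G.V) (huv : u ≠ v)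
    (hpar : Nat.card H.E ≤ ({e | G.ends e = s(u, v)} : Set G.E).ncard)
    (hG : ¬ Immersion H G)
    (G' : Multigraph) (q : G.V → G'.V) (x : G'.V)
    (hcons : IsConsolidation G {u, v} G' q x) :
    ¬ Immersion H G' := by
  classical
  rintro ⟨I⟩
  obtain ⟨hsurj, hX, hnX, hinjq, φ, hφ⟩ := hcons
  have hu : q u = x := hX u (by simp)
  have hv : q v = x := hX v (by simp)
  set sec : G'.V → G.V := fun y => if y = x then u else Function.surjInv hsurj y with hsecdef
  have hqsec : ∀ y, q (sec y) = y := by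
    intro y
    by_cases hy : y = x
    · simp [hsecdef, hy, hu]
    · simp [hsecdef, hy, Function.surjInv_eq hsurj]
  have hsecinj : Function.Injective sec := fun y z hyz => by
    rw [← hqsec y, ← hqsec z, hyz]
  have hq : ∀ a b : G.V, q a = q b → a ≠ b → s(a, b) = s(u, v) := by
    have hmem : ∀ c d : G.V, q c = q d → c ≠ d → c ∈ ({u, v} : Set G.V) := by
      intro c d hcd hne'
      by_contra hc
      by_cases hd : d ∈ ({u, v} : Set G.V)
      · exact hnX c hc (by rw [hcd, hX d hd])
      · exact hne' (hinjq c d hc hd hcd)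
    intro a b hab hne
    have ha := hmem a b hab hne
    have hb := hmem b a hab.symm hne.symm
    simp only [Set.mem_insert_iff, Set.mem_singleton_iff] at ha hb
    rcases ha with ha | ha <;> rcases hb with hb | hb <;> subst ha <;> subst hb
    · exact absurd rfl hne
    · rfl
    · exact Sym2.eq_swap
    · exact absurd rfl hne
  set lift : G'.E → G.E := fun e' => (φ.symm e').1 with hliftdef
  have hlift : ∀ e', Sym2.map q (G.ends (lift e')) = G'.ends e' := by
    intro e'
    have h1 := hφ (φ.symm e')
    rw [Equiv.apply_symm_apply] at h1
    exact h1.symm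
  have hliftinj : Function.Injective lift := by
    intro e₁ e₂ h12
    have h3 : φ.symm e₁ = φ.symm e₂ := Subtype.ext h12
    simpa using congrArg φ h3
  have hcard : Nat.card H.E ≤ Nat.card ({e : G.E | G.ends e = s(u, v)} : Set G.E) := by
    rw [Nat.card_coe_set_eq]; exact hpar
  obtain ⟨σ0⟩ : Nonempty (H.E ↪ ({e : G.E | G.ends e = s(u, v)} : Set G.E)) := by
    haveI := Fintype.ofFinite H.E
    haveI := Fintype.ofFinite (({e : G.E | G.ends e = s(u, v)} : Set G.E))
    apply Function.Embedding.nonempty_of_card_le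
    rwa [← Nat.card_eq_fintype_card, ← Nat.card_eq_fintype_card]
  set σ : H.E → G.E := fun f => (σ0 f).1 with hσdef
  have hσends : ∀ f, G.ends (σ f) = s(u, v) := fun f => (σ0 f).2
  have hσinj : Function.Injective σ := fun f g hfg => σ0.injective (Subtype.ext hfg)
  have hliftσ : ∀ e' f, lift e' ≠ σ f := by
    intro e' f heq
    obtain ⟨w, hw, hwX⟩ := (φ.symm e').2
    have heq2 : G.ends ((φ.symm e').1) = s(u, v) := by
      rw [show ((φ.symm e').1) = σ f from heq, hσends]
    rw [heq2] at hw
    rcases Sym2.mem_iff.mp hw with h | h <;> exact hwX (by simp [h])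
  have hF : ∀ f : H.E, ConsProofAux.FinalRes q (σ f) lift (I.path f)
      (sec (I.pathEnds f).1) (sec (I.pathEnds f).2) :=
    fun f => ConsProofAux.finalLift hq (σ f) (hσends f) lift hlift (I.path f) _ _
      (hqsec _) (hqsec _)
  refine hG ⟨⟨sec ∘ I.π, hsecinj.comp I.inj,
    fun f => (sec (I.pathEnds f).1, sec (I.pathEnds f).2),
    fun f => (hF f).walk, ?_, ?_, ?_⟩⟩
  · intro f
    calc Sym2.map (sec ∘ I.π) (H.ends f)
        = Sym2.map sec (Sym2.map I.π (H.ends f)) := (Sym2.map_map _).symm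
      _ = Sym2.map sec s((I.pathEnds f).1, (I.pathEnds f).2) := by rw [I.ends_eq f]
      _ = _ := Sym2.map_pair_eq _ _ _
  · intro f
    exact (hF f).nodup (I.isPath f)
  · intro f f' hne e hef hef'
    rcases (hF f).edges_sub e hef with he | ⟨e₁, he₁, rfl⟩
    · rcases (hF f').edges_sub e hef' with he' | ⟨e₂, he₂, he2⟩
      · exact hne (hσinj (he.symm.trans he'))
      · exact hliftσ e₂ f (he2.symm.trans he)
    · rcases (hF f').edges_sub _ hef' with he' | ⟨e₂, he₂, he2⟩
      · exact hliftσ e₁ f' he'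
      · have h4 := hliftinj he2
        subst h4
        exact I.edge_disj f f' hne e₁ he₁ he₂
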